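/- Let k ≥ 4 and let ψ(q) = q/φ(q). Then Σ_{1 ≤ q ≤ Q} φ(q)·(κ(q)·ψ(q))^{k+1} ≪_ε Q^ε for every ε > 0, uniformly in Q ≥ 1. -/

import Mathlib

open Real

lemma kappa_pp (k : ℕ) (hk : 4 ≤ k) (κ : ℕ → ℝ)
    (hκA : ∀ p : ℕ, p.Prime → ∀ u : ℕ,
      κ (p ^ (u * k + 1)) = (k : ℝ) * (p : ℝ) ^ (-(u : ℝ) - 1/2))
    (hκB : ∀ p : ℕ, p.Prime → ∀ u v : ℕ, 2 ≤ v → v ≤ k →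
      κ (p ^ (u * k + v)) = (p : ℝ) ^ (-(u : ℝ) - 1))
    {p e : ℕ} (hp : p.Prime) (he : e ≠ 0) :
    0 < κ (p ^ e) ∧
      κ (p ^ e) ^ (k + 1) * (p : ℝ) ^ e ≤
        (k : ℝ) ^ (k + 1) * (p : ℝ) ^ (-1 - (((e - 1) / k : ℕ) : ℝ)) := by
  have hk0 : 0 < k := by omega
  have hP1 : (1 : ℝ) < (p : ℝ) := by exact_mod_cast hp.one_lt
  have hP0 : (0 : ℝ) < (p : ℝ) := by linarith
  set u : ℕ := (e - 1) / k with hu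
  set v : ℕ := (e - 1) % k + 1 with hv
  have hdm := Nat.div_add_mod (e - 1) k
  have hml : (e - 1) % k < k := Nat.mod_lt _ hk0
  have hev : u * k + v = e := by rw [hu, hv, mul_comm]; omega
  have hvk : v ≤ k := by omega
  have hke : (k:ℝ) ^ (k+1) ≥ 1 := one_le_pow₀ (by exact_mod_cast hk0)
  rcases eq_or_lt_of_le (show 1 ≤ v by omega) with hv1 | hv2
  · -- v = 1
    have hκ : κ (p ^ e) = (k : ℝ) * (p : ℝ) ^ (-(u : ℝ) - 1/2) := by
      rw [← hev, ← hv1]; exact hκA p hp u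
    constructor
    · rw [hκ]
      positivity
    · rw [hκ, mul_pow, ← Real.rpow_natCast ((p:ℝ) ^ (-(u:ℝ) - 1/2)) (k+1),
        ← Real.rpow_natCast (p:ℝ) e, ← Real.rpow_mul hP0.le, mul_assoc,
        ← Real.rpow_add hP0]
      refine mul_le_mul_of_nonneg_left ?_ (by positivity)
      apply Real.rpow_le_rpow_of_exponent_le hP1.le
      have he' : (e : ℝ) = (u : ℝ) * k + 1 := by
        rw [← hev, ← hv1]; push_cast; ring
      have hk4 : (4 : ℝ) ≤ k := by exact_mod_cast hk
      rw [he']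
      push_cast
      nlinarith [Nat.cast_nonneg (α := ℝ) u]
  · -- 2 ≤ v
    have hκ : κ (p ^ e) = (p : ℝ) ^ (-(u : ℝ) - 1) := by
      rw [← hev]; exact hκB p hp u v hv2 hvk
    constructor
    · rw [hκ]; positivity
    · rw [hκ, ← Real.rpow_natCast ((p:ℝ) ^ (-(u:ℝ) - 1)) (k+1),
        ← Real.rpow_natCast (p:ℝ) e, ← Real.rpow_mul hP0.le, ← Real.rpow_add hP0]
      calc (p:ℝ) ^ ((-(u:ℝ) - 1) * (k+1 : ℕ) + e) ≤ (p:ℝ) ^ (-1 - (u:ℝ)) := by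
            apply Real.rpow_le_rpow_of_exponent_le hP1.le
            have he' : (e : ℝ) = (u : ℝ) * k + v := by rw [← hev]; push_cast; ring
            have hvk' : (v : ℝ) ≤ k := by exact_mod_cast hvk
            have hvk' : (v : ℝ) ≤ k := by exact_mod_cast hvk
            rw [he']
            push_cast
            have hid : (-(u:ℝ) - 1) * ((k:ℝ) + 1) + ((u:ℝ) * (k:ℝ) + ((((e - 1) % k : ℕ):ℝ) + 1))
                = -(u:ℝ) - (k:ℝ) + (((e - 1) % k : ℕ):ℝ) := by ring
            push_cast at hid hvk'
            linarith [hid, hvk']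
        _ ≤ (k : ℝ) ^ (k+1) * (p:ℝ) ^ (-1 - (u:ℝ)) := by
            nlinarith [Real.rpow_pos_of_pos hP0 (-1 - (u:ℝ))]

lemma kappa_pos (k : ℕ) (hk : 4 ≤ k) (κ : ℕ → ℝ)
    (hκ1 : κ 1 = 1)
    (hκmul : ∀ m n : ℕ, Nat.Coprime m n → κ (m * n) = κ m * κ n)
    (hκA : ∀ p : ℕ, p.Prime → ∀ u : ℕ,
      κ (p ^ (u * k + 1)) = (k : ℝ) * (p : ℝ) ^ (-(u : ℝ) - 1/2))
    (hκB : ∀ p : ℕ, p.Prime → ∀ u v : ℕ, 2 ≤ v → v ≤ k →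
      κ (p ^ (u * k + v)) = (p : ℝ) ^ (-(u : ℝ) - 1)) :
    ∀ n : ℕ, n ≠ 0 → 0 < κ n := by
  intro n
  induction n using Nat.recOnPosPrimePosCoprime with
  | prime_pow p e hp he =>
      intro _
      exact (kappa_pp k hk κ hκA hκB hp (by omega)).1
  | zero => intro h; exact absurd rfl h
  | one => intro _; rw [hκ1]; norm_num
  | coprime a b ha hb hab Pa Pb =>
      intro _
      rw [hκmul a b hab]
      exact mul_pos (Pa (by omega)) (Pb (by omega))

lemma g_pp_bound (k : ℕ) (hk : 4 ≤ k) (κ : ℕ → ℝ)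
    (hκA : ∀ p : ℕ, p.Prime → ∀ u : ℕ,
      κ (p ^ (u * k + 1)) = (k : ℝ) * (p : ℝ) ^ (-(u : ℝ) - 1/2))
    (hκB : ∀ p : ℕ, p.Prime → ∀ u v : ℕ, 2 ≤ v → v ≤ k →
      κ (p ^ (u * k + v)) = (p : ℝ) ^ (-(u : ℝ) - 1))
    (ε : ℝ) (hε : 0 < ε) {p e : ℕ} (hp : p.Prime) (he : e ≠ 0) :
    ((p ^ e : ℕ).totient : ℝ) *
        (κ (p ^ e) * (((p ^ e : ℕ) : ℝ) / ((p ^ e : ℕ).totient : ℝ))) ^ (k + 1) *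
        (((p ^ e : ℕ) : ℝ)) ^ (-ε)
      ≤ ((2 : ℝ) ^ k * (k : ℝ) ^ (k + 1) * (p : ℝ) ^ (-(1 + ε))) *
          ((2 : ℝ)⁻¹) ^ ((e - 1) / k) := by
  have hP2 : (2 : ℝ) ≤ (p : ℝ) := by exact_mod_cast hp.two_le
  have hP0 : (0 : ℝ) < (p : ℝ) := by linarith
  have hP1 : (1 : ℝ) ≤ (p : ℝ) := by linarith
  have hB0 : (0 : ℝ) < (p : ℝ) - 1 := by linarith
  have hA0 : (0 : ℝ) < (p : ℝ) ^ (e - 1) := pow_pos hP0 _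
  have hΦ : (((p ^ e : ℕ).totient : ℝ)) = (p : ℝ) ^ (e - 1) * ((p : ℝ) - 1) := by
    rw [Nat.totient_prime_pow hp (by omega)]
    push_cast [Nat.cast_sub hp.one_le]
    ring
  have hE : (((p ^ e : ℕ) : ℝ)) = (p : ℝ) * (p : ℝ) ^ (e - 1) := by
    push_cast
    rw [← pow_succ']
    congr 1
    omega
  obtain ⟨hκpos, hκbd⟩ := kappa_pp k hk κ hκA hκB hp he
  -- the structural identity
  have key : (((p ^ e : ℕ).totient : ℝ)) *
      (κ (p ^ e) * (((p ^ e : ℕ) : ℝ) / ((p ^ e : ℕ).totient : ℝ))) ^ (k + 1)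
      = ((p : ℝ) / ((p : ℝ) - 1)) ^ k * (κ (p ^ e) ^ (k + 1) * ((p : ℝ)) ^ e) := by
    have hpe : ((p : ℝ)) ^ e = (p : ℝ) * (p : ℝ) ^ (e - 1) := by
      rw [← pow_succ']; congr 1; omega
    rw [hΦ, hE, hpe]
    rw [show (p:ℝ) * (p:ℝ)^(e-1) / ((p:ℝ)^(e-1) * ((p:ℝ)-1)) = (p:ℝ)/((p:ℝ)-1) from by
      field_simp]
    rw [mul_pow, pow_succ]
    have hq : ((p:ℝ)-1) * ((p:ℝ)/((p:ℝ)-1)) = p := by field_simp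
    linear_combination ((p:ℝ)^(e-1) * κ (p^e)^k * ((p:ℝ)/((p:ℝ)-1))^k * κ (p^e)) * hq
  rw [key]
  have h1 : ((p : ℝ) / ((p : ℝ) - 1)) ^ k ≤ (2 : ℝ) ^ k := by
    apply pow_le_pow_left₀ (by positivity)
    rw [div_le_iff₀ hB0]; linarith
  have h2 : κ (p ^ e) ^ (k + 1) * ((p : ℝ)) ^ e ≤
      (k : ℝ) ^ (k + 1) * (((2 : ℝ)⁻¹) ^ ((e - 1) / k) * (p : ℝ) ^ (-(1 : ℝ))) := by
    refine hκbd.trans ?_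
    have : (p : ℝ) ^ (-1 - (((e - 1) / k : ℕ) : ℝ)) =
        (p : ℝ) ^ (-(((e - 1) / k : ℕ) : ℝ)) * (p : ℝ) ^ (-(1 : ℝ)) := by
      rw [← Real.rpow_add hP0]; ring_nf
    rw [this, ← mul_assoc]
    have hfac : (p : ℝ) ^ (-(((e - 1) / k : ℕ) : ℝ)) ≤ ((2 : ℝ)⁻¹) ^ ((e - 1) / k) := by
      rw [Real.rpow_neg hP0.le, Real.rpow_natCast, inv_pow]
      exact inv_anti₀ (by positivity) (pow_le_pow_left₀ (by norm_num) hP2 _)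
    rw [mul_assoc]
    exact mul_le_mul_of_nonneg_left
      (mul_le_mul_of_nonneg_right hfac (Real.rpow_pos_of_pos hP0 _).le) (by positivity)
  have h3 : (((p ^ e : ℕ) : ℝ)) ^ (-ε) ≤ (p : ℝ) ^ (-ε) := by
    have hEP : (p : ℝ) ≤ ((p ^ e : ℕ) : ℝ) := by
      push_cast
      exact le_self_pow₀ hP1 he
    rw [Real.rpow_neg (by positivity), Real.rpow_neg hP0.le]
    apply inv_anti₀ (Real.rpow_pos_of_pos hP0 _)
    exact Real.rpow_le_rpow hP0.le hEP hε.le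
  calc ((p : ℝ) / ((p : ℝ) - 1)) ^ k * (κ (p ^ e) ^ (k + 1) * ((p : ℝ)) ^ e) *
        (((p ^ e : ℕ) : ℝ)) ^ (-ε)
      ≤ (2 : ℝ) ^ k * ((k : ℝ) ^ (k + 1) * (((2 : ℝ)⁻¹) ^ ((e - 1) / k) *
          (p : ℝ) ^ (-(1 : ℝ)))) * (p : ℝ) ^ (-ε) := by
        have hb2 : (0:ℝ) ≤ κ (p ^ e) ^ (k + 1) * ((p : ℝ)) ^ e := by positivity
        have hb3 : (0:ℝ) ≤ (((p ^ e : ℕ) : ℝ)) ^ (-ε) := by positivity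
        exact mul_le_mul (mul_le_mul h1 h2 hb2 (by positivity)) h3 hb3 (by positivity)
    _ = ((2 : ℝ) ^ k * (k : ℝ) ^ (k + 1) * (p : ℝ) ^ (-(1 + ε))) *
          ((2 : ℝ)⁻¹) ^ ((e - 1) / k) := by
        rw [show (-(1 + ε) : ℝ) = (-(1:ℝ)) + (-ε) by ring, Real.rpow_add hP0]
        ring

/-- Let `k ≥ 4` and `ψ(q) = q/φ(q)`. Then
`Σ_{1 ≤ q ≤ Q} φ(q)·(κ(q)·ψ(q))^{k+1} ≪_ε Q^ε` for every `ε > 0`, uniformly in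
`Q ≥ 1`. -/
theorem stmt19 (k : ℕ) (hk : 4 ≤ k) (κ : ℕ → ℝ)
    (hκ1 : κ 1 = 1)
    (hκmul : ∀ m n : ℕ, Nat.Coprime m n → κ (m * n) = κ m * κ n)
    (hκA : ∀ p : ℕ, p.Prime → ∀ u : ℕ,
      κ (p ^ (u * k + 1)) = (k : ℝ) * (p : ℝ) ^ (-(u : ℝ) - 1/2))
    (hκB : ∀ p : ℕ, p.Prime → ∀ u v : ℕ, 2 ≤ v → v ≤ k →
      κ (p ^ (u * k + v)) = (p : ℝ) ^ (-(u : ℝ) - 1))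
    (ε : ℝ) (hε : 0 < ε) :
    ∃ C : ℝ, 0 < C ∧ ∀ Q : ℝ, 1 ≤ Q →
      ∑ q ∈ Finset.Icc 1 ⌊Q⌋₊,
        (Nat.totient q : ℝ) * (κ q * ((q : ℝ) / (Nat.totient q : ℝ))) ^ (k + 1)
      ≤ C * Q ^ ε := by
  have hk0 : 0 < k := by omega
  set g : ℕ → ℝ := fun q =>
    (Nat.totient q : ℝ) * (κ q * ((q : ℝ) / (Nat.totient q : ℝ))) ^ (k + 1) * (q : ℝ) ^ (-ε)
    with hgdef
  have hκpos := kappa_pos k hk κ hκ1 hκmul hκA hκB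
  have hg0 : g 0 = 0 := by simp [hgdef]
  have hg1 : g 1 = 1 := by simp [hgdef, hκ1]
  have hgnn : ∀ n, 0 ≤ g n := by
    intro n
    rcases eq_or_ne n 0 with rfl | hn
    · rw [hg0]
    · have h1 : (0:ℝ) ≤ (Nat.totient n : ℝ) := by positivity
      have h2 : (0:ℝ) ≤ κ n * ((n : ℝ) / (Nat.totient n : ℝ)) := by
        apply mul_nonneg (hκpos n hn).le
        positivity
      exact mul_nonneg (mul_nonneg h1 (pow_nonneg h2 _)) (Real.rpow_nonneg (by positivity) _)
  -- multiplicativity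
  have hgmul : ∀ {m n : ℕ}, Nat.Coprime m n → g (m * n) = g m * g n := by
    intro m n hmn
    rcases eq_or_ne m 0 with rfl | hm
    · rw [Nat.coprime_zero_left] at hmn
      rw [hmn, zero_mul, hg0, hg1, mul_one]
    rcases eq_or_ne n 0 with rfl | hn
    · rw [Nat.coprime_zero_right] at hmn
      rw [hmn, one_mul, hg0, hg1, one_mul]
    have hm0 : (0:ℝ) < (m : ℝ) := by exact_mod_cast Nat.pos_of_ne_zero hm
    have hn0 : (0:ℝ) < (n : ℝ) := by exact_mod_cast Nat.pos_of_ne_zero hn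
    have htm : (0:ℝ) < (Nat.totient m : ℝ) := by
      exact_mod_cast Nat.totient_pos.mpr (Nat.pos_of_ne_zero hm)
    have htn : (0:ℝ) < (Nat.totient n : ℝ) := by
      exact_mod_cast Nat.totient_pos.mpr (Nat.pos_of_ne_zero hn)
    have htot : (Nat.totient (m * n) : ℝ) = (Nat.totient m : ℝ) * (Nat.totient n : ℝ) := by
      rw [← Nat.cast_mul, Nat.totient_mul hmn]
    have hrpow : ((m * n : ℕ) : ℝ) ^ (-ε) = (m : ℝ) ^ (-ε) * (n : ℝ) ^ (-ε) := by
      push_cast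
      rw [Real.mul_rpow hm0.le hn0.le]
    simp only [hgdef]
    rw [hκmul m n hmn, htot, hrpow]
    push_cast
    rw [show κ m * κ n * ((m : ℝ) * n / ((Nat.totient m : ℝ) * (Nat.totient n : ℝ)))
        = (κ m * ((m:ℝ) / (Nat.totient m : ℝ))) * (κ n * ((n:ℝ) / (Nat.totient n : ℝ))) from by
      field_simp]
    rw [mul_pow]
    ring
  -- geometric comparison sequence
  set c : ℕ → ℝ := fun m => ((2:ℝ)⁻¹) ^ (m / k) with hcdef
  have hc_nn : ∀ m, (0:ℝ) ≤ c m := fun m => by positivity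
  have hcsum : Summable c := by
    set r : ℝ := (2:ℝ) ^ (-((k:ℝ))⁻¹) with hrdef
    have hr0 : 0 < r := Real.rpow_pos_of_pos (by norm_num) _
    have hr1 : r < 1 := by
      apply Real.rpow_lt_one_of_one_lt_of_neg (by norm_num)
      simp only [neg_neg, Left.neg_neg_iff]
      positivity
    apply Summable.of_nonneg_of_le hc_nn (fun m => ?_)
      ((summable_geometric_of_lt_one hr0.le hr1).mul_left 2)
    have hrm : r ^ m = (2:ℝ) ^ (-((k:ℝ))⁻¹ * m) := by
      rw [hrdef, ← Real.rpow_natCast ((2:ℝ) ^ (-((k:ℝ))⁻¹)) m, ← Real.rpow_mul (by norm_num)]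
    have hcm : c m = (2:ℝ) ^ (-(((m / k : ℕ)) : ℝ)) := by
      rw [Real.rpow_neg (by norm_num), Real.rpow_natCast]
      exact inv_pow 2 (m / k)
    have h2 : 2 * r ^ m = (2:ℝ) ^ (1 + (-((k:ℝ))⁻¹ * m)) := by
      rw [Real.rpow_add (by norm_num), Real.rpow_one, hrm]
    rw [hcm, h2]
    apply Real.rpow_le_rpow_of_exponent_le (by norm_num)
    have hdiv : (m : ℝ) < (k : ℝ) * ((m / k : ℕ) : ℝ) + (k : ℝ) := by
      have h1 := Nat.div_add_mod m k
      have h2 := Nat.mod_lt m hk0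
      have hnat : m < k * (m / k) + k := by omega
      exact_mod_cast hnat
    have hk0' : (0:ℝ) < (k:ℝ) := by exact_mod_cast hk0
    have h3 : (m:ℝ) / (k:ℝ) < ((m / k : ℕ) : ℝ) + 1 := by
      rw [div_lt_iff₀ hk0']; nlinarith [hdiv]
    have h4 : ((k:ℝ))⁻¹ * (m:ℝ) = (m:ℝ) / (k:ℝ) := by ring
    linarith
  set B' : ℝ := (2:ℝ) ^ k * (k:ℝ) ^ (k + 1) with hB'def
  have hB'0 : 0 ≤ B' := by positivity
  set D : ℝ := ∑' m, c m with hDdef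
  have hD0 : 0 ≤ D := tsum_nonneg hc_nn
  -- per-prime bounds
  have hgpp : ∀ {p : ℕ}, p.Prime → ∀ e : ℕ,
      g (p ^ (e + 1)) ≤ (B' * (p:ℝ) ^ (-(1 + ε))) * c e := by
    intro p hp e
    have h := g_pp_bound k hk κ hκA hκB ε hε hp (Nat.succ_ne_zero e)
    have he1 : (e + 1 - 1) / k = e / k := by rw [Nat.add_sub_cancel]
    simp only [hgdef]
    calc (Nat.totient (p ^ (e+1)) : ℝ) *
          (κ (p ^ (e+1)) * (((p ^ (e+1) : ℕ) : ℝ) / (Nat.totient (p ^ (e+1)) : ℝ))) ^ (k + 1) *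
          ((p ^ (e+1) : ℕ) : ℝ) ^ (-ε)
        ≤ ((2 : ℝ) ^ k * (k : ℝ) ^ (k + 1) * (p : ℝ) ^ (-(1 + ε))) *
            ((2 : ℝ)⁻¹) ^ ((e + 1 - 1) / k) := by push_cast at h ⊢; exact h
      _ = (B' * (p:ℝ) ^ (-(1 + ε))) * c e := by rw [he1]
  have hgsum : ∀ {p : ℕ}, p.Prime → Summable (fun e : ℕ => g (p ^ e)) := by
    intro p hp
    rw [← summable_nat_add_iff 1]
    have hP0 : (0:ℝ) < (p:ℝ) := by exact_mod_cast hp.pos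
    exact Summable.of_nonneg_of_le (fun e => hgnn _) (fun e => hgpp hp e)
      (hcsum.mul_left _)
  have hnorm : ∀ {p : ℕ}, p.Prime → Summable (fun e : ℕ => ‖g (p ^ e)‖) := by
    intro p hp
    have : (fun e : ℕ => ‖g (p ^ e)‖) = fun e : ℕ => g (p ^ e) := by
      funext e; exact Real.norm_of_nonneg (hgnn _)
    rw [this]
    exact hgsum hp
  have htail : ∀ {p : ℕ}, p.Prime →
      ∑' e : ℕ, g (p ^ e) ≤ 1 + (B' * D) * (p:ℝ) ^ (-(1 + ε)) := by
    intro p hp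
    rw [Summable.tsum_eq_zero_add (hgsum hp), pow_zero, hg1]
    have hshift : Summable (fun e : ℕ => g (p ^ (e + 1))) :=
      (summable_nat_add_iff 1).mpr (hgsum hp)
    have h1 : ∑' e : ℕ, g (p ^ (e + 1)) ≤ ∑' e : ℕ, (B' * (p:ℝ) ^ (-(1 + ε))) * c e :=
      Summable.tsum_le_tsum (fun e => hgpp hp e) hshift (hcsum.mul_left _)
    rw [tsum_mul_left] at h1
    have : B' * (p:ℝ) ^ (-(1 + ε)) * D = (B' * D) * (p:ℝ) ^ (-(1 + ε)) := by ring
    linarith [h1, this ▸ h1]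
  -- the zeta-type constant
  have hZsum : Summable (fun n : ℕ => (n:ℝ) ^ (-(1 + ε))) :=
    Real.summable_nat_rpow.mpr (by linarith)
  set Z : ℝ := ∑' n : ℕ, (n:ℝ) ^ (-(1 + ε)) with hZdef
  refine ⟨Real.exp ((B' * D) * Z), Real.exp_pos _, fun Q hQ => ?_⟩
  set N : ℕ := ⌊Q⌋₊ with hNdef
  have hQ0 : (0:ℝ) < Q := by linarith
  obtain ⟨hsm, hhs⟩ :=
    EulerProduct.summable_and_hasSum_smoothNumbers_prod_primesBelow_tsum hg1 hgmul hnorm (N + 1)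
  set S : ℝ := ∏ p ∈ (N + 1).primesBelow, ∑' e : ℕ, g (p ^ e) with hSdef
  -- step 1 : original sum ≤ Q^ε * (sum of g)
  have step1 : ∑ q ∈ Finset.Icc 1 N,
      (Nat.totient q : ℝ) * (κ q * ((q : ℝ) / (Nat.totient q : ℝ))) ^ (k + 1)
      ≤ Q ^ ε * ∑ q ∈ Finset.Icc 1 N, g q := by
    rw [Finset.mul_sum]
    apply Finset.sum_le_sum
    intro q hq
    rw [Finset.mem_Icc] at hq
    have hq1 : 1 ≤ q := hq.1
    have hq0 : (0:ℝ) < (q:ℝ) := by exact_mod_cast hq1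
    have hqQ : (q:ℝ) ≤ Q :=
      le_trans (Nat.cast_le.mpr hq.2) (Nat.floor_le hQ0.le)
    have hgq : (Nat.totient q : ℝ) * (κ q * ((q : ℝ) / (Nat.totient q : ℝ))) ^ (k + 1)
        = g q * (q:ℝ) ^ ε := by
      simp only [hgdef]
      rw [mul_assoc, ← Real.rpow_add hq0]
      norm_num
    rw [hgq]
    have : (q:ℝ) ^ ε ≤ Q ^ ε := Real.rpow_le_rpow hq0.le hqQ hε.le
    calc g q * (q:ℝ) ^ ε ≤ g q * Q ^ ε := mul_le_mul_of_nonneg_left this (hgnn q)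
      _ = Q ^ ε * g q := by ring
  -- step 2 : sum of g over Icc ≤ Euler product S
  have step2 : ∑ q ∈ Finset.Icc 1 N, g q ≤ S := by
    have hind : HasSum (Set.indicator (Nat.smoothNumbers (N + 1)) g) S :=
      hasSum_subtype_iff_indicator.mp hhs
    have heq : ∑ q ∈ Finset.Icc 1 N, g q
        = ∑ q ∈ Finset.Icc 1 N, Set.indicator (Nat.smoothNumbers (N + 1)) g q := by
      apply Finset.sum_congr rfl
      intro q hq
      rw [Finset.mem_Icc] at hq
      have hsmooth : q ∈ Nat.smoothNumbers (N + 1) := by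
        rw [Nat.mem_smoothNumbers]
        refine ⟨by omega, fun p hpq => ?_⟩
        have hdvd : p ∣ q := Nat.dvd_of_mem_primeFactorsList hpq
        have := Nat.le_of_dvd (by omega) hdvd
        omega
      rw [Set.indicator_of_mem hsmooth]
    rw [heq]
    exact sum_le_hasSum _ (fun i _ => Set.indicator_nonneg (fun n _ => hgnn n) i) hind
  -- step 3 : S ≤ exp((B'*D) * Z)
  have step3 : S ≤ Real.exp ((B' * D) * Z) := by
    have h1 : S ≤ ∏ p ∈ (N + 1).primesBelow, Real.exp ((B' * D) * (p:ℝ) ^ (-(1 + ε))) := by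
      apply Finset.prod_le_prod
      · intro p _
        exact tsum_nonneg (fun e => hgnn _)
      · intro p hpmem
        have hp := Nat.prime_of_mem_primesBelow hpmem
        refine (htail hp).trans ?_
        rw [add_comm]
        exact Real.add_one_le_exp _
    rw [← Real.exp_sum] at h1
    refine h1.trans (Real.exp_le_exp.mpr ?_)
    rw [← Finset.mul_sum]
    apply mul_le_mul_of_nonneg_left ?_ (by positivity)
    exact Summable.sum_le_tsum _ (fun i _ => Real.rpow_nonneg (Nat.cast_nonneg i) _) hZsum
  calc ∑ q ∈ Finset.Icc 1 N,
        (Nat.totient q : ℝ) * (κ q * ((q : ℝ) / (Nat.totient q : ℝ))) ^ (k + 1)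
      ≤ Q ^ ε * ∑ q ∈ Finset.Icc 1 N, g q := step1
    _ ≤ Q ^ ε * S := mul_le_mul_of_nonneg_left step2 (Real.rpow_nonneg hQ0.le _)
    _ ≤ Q ^ ε * Real.exp ((B' * D) * Z) :=
        mul_le_mul_of_nonneg_left step3 (Real.rpow_nonneg hQ0.le _)
    _ = Real.exp ((B' * D) * Z) * Q ^ ε := by ring
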